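/- Let L : ℕ → ℝ with L_n ≥ 1 for all n and B_N = Σ_{n=0}^N L_n, and assume there exist c > 1, N₀ with B_{2N} ≤ c·B_N for all N > N₀. Let η be a sequence of functions on (0,1), each differentiable with η_n′(x) ≤ 0, satisfying the recursion η_n(x) = (η_{n+1}(x) + 1/L_n)/(1 + x·L_n·η_{n+1}(x)) and the bounds 1/L_n ≤ η_n(x) ≤ x^{−1/2} for all n and x ∈ (0,1). Then there exist constants c₀ > 0 and x₀ ∈ (0,1) such that for every x ∈ (0,x₀) and every integer N ≥ 1 satisfying x·F_N(x) > 1 ≥ x·F_{N−1}(x), one has |η_0′(x)| ≥ c₀·G_{N−1}(x). -/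

import Mathlib

open Finset Real

private lemma sq_le_two_pow' : ∀ i : ℕ, 8 ≤ i → (i+2)^2 ≤ 2^i := by
  intro i hi
  induction i, hi using Nat.le_induction with
  | base => norm_num
  | succ n hn ih =>
    have h1 : (n+1+2)^2 ≤ 2*(n+2)^2 := by nlinarith
    calc (n+1+2)^2 ≤ 2*(n+2)^2 := h1
      _ ≤ 2*2^n := by omega
      _ = 2^(n+1) := by ring

private lemma growth' (L : ℕ → ℝ) (hL : ∀ n, 1 ≤ L n) (c : ℝ) (hc : 1 < c) (N₀ : ℕ)
    (hdbl : ∀ N : ℕ, N₀ < N →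
      (∑ n ∈ Finset.range (2*N+1), L n) ≤ c * ∑ n ∈ Finset.range (N+1), L n) :
    ∃ N₁ : ℕ, 1 ≤ N₁ ∧ ∀ N : ℕ, N₁ ≤ N → (∑ n ∈ Finset.range (N+1), L n) ≤ 2^N := by
  set M := N₀ + 1 with hM
  set B : ℕ → ℝ := fun k => ∑ n ∈ Finset.range (k+1), L n with hB
  have hc0 : (0:ℝ) < c := lt_trans zero_lt_one hc
  have Bnonneg : ∀ k, 0 ≤ B k := fun k =>
    Finset.sum_nonneg fun i _ => le_trans zero_le_one (hL i)
  have Bmono : ∀ k l : ℕ, k ≤ l → B k ≤ B l := by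
    intro k l h
    exact Finset.sum_le_sum_of_subset_of_nonneg
      (Finset.range_subset_range.2 (by omega)) (fun i _ _ => le_trans zero_le_one (hL i))
  have hiter : ∀ j : ℕ, B (2^j * M) ≤ c^j * B M := by
    intro j
    induction j with
    | zero => simp
    | succ j ih =>
      have hgt : N₀ < 2^j * M := by
        have : 1 ≤ 2^j := Nat.one_le_two_pow
        calc N₀ < M := by omega
          _ ≤ 2^j * M := Nat.le_mul_of_pos_left M (by omega)
      have h1 : B (2^(j+1) * M) = B (2*(2^j*M)) := by ring_nf
      have h2 := hdbl (2^j*M) hgt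
      calc B (2^(j+1) * M) = B (2*(2^j*M)) := h1
        _ ≤ c * B (2^j*M) := h2
        _ ≤ c * (c^j * B M) := by nlinarith
        _ = c^(j+1) * B M := by ring
  obtain ⟨d, hd⟩ := exists_nat_ge c
  obtain ⟨m, hm⟩ := exists_nat_ge (B M)
  set j₀ := max 9 (d + m + 1) with hj₀
  have keynat : ∀ j : ℕ, j₀ ≤ j → d^j * m ≤ 2^(2^(j-1)) := by
    intro j hj
    have h9 : 9 ≤ j := le_trans (le_max_left _ _) hj
    have ha : d + m + 1 ≤ j := le_trans (le_max_right _ _) hj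
    have h1 : d^j * m ≤ 2^(d*j) * 2^m := by
      refine Nat.mul_le_mul ?_ (le_of_lt (Nat.lt_two_pow_self (n := m)))
      calc d^j ≤ (2^d)^j := Nat.pow_le_pow_left (le_of_lt (Nat.lt_two_pow_self (n := d))) j
        _ = 2^(d*j) := by rw [← pow_mul]
    rw [← pow_add] at h1
    refine le_trans h1 (Nat.pow_le_pow_right (by norm_num) ?_)
    have h2 : d*j + m ≤ (d+m+1)*j := by
      have hm' : m ≤ m*j := Nat.le_mul_of_pos_right m (by omega)
      nlinarith
    have h3 : (d+m+1)*j ≤ j*j := Nat.mul_le_mul_right j ha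
    have h4 : j*j ≤ (j-1+2)^2 := by
      have hj1 : j - 1 + 2 = j + 1 := by omega
      rw [hj1]; nlinarith
    have h5 : (j-1+2)^2 ≤ 2^(j-1) := sq_le_two_pow' (j-1) (by omega)
    omega
  refine ⟨2^j₀ * M, by
    have : 1 ≤ 2^j₀ := Nat.one_le_two_pow
    exact Nat.one_le_iff_ne_zero.2 (by positivity), ?_⟩
  intro N hN
  have hMpos : 0 < M := by omega
  have hex : ∃ j, N ≤ 2^j * M := by
    refine ⟨N, ?_⟩
    calc N ≤ 2^N := le_of_lt (Nat.lt_two_pow_self (n := N))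
      _ ≤ 2^N * M := Nat.le_mul_of_pos_right _ hMpos
  set j := Nat.find hex with hjdef
  have hjspec : N ≤ 2^j * M := Nat.find_spec hex
  have hjge : j₀ ≤ j := by
    have h1 : 2^j₀ * M ≤ 2^j * M := le_trans hN hjspec
    have h2 : (2:ℕ)^j₀ ≤ 2^j := Nat.le_of_mul_le_mul_right h1 hMpos
    exact (Nat.pow_le_pow_iff_right (by norm_num)).mp h2
  have hjpos : 1 ≤ j := le_trans (by omega) hjge
  have hmin : ¬ N ≤ 2^(j-1) * M := Nat.find_min hex (by omega)
  have hlow : 2^(j-1) ≤ N := by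
    have := not_le.mp hmin
    calc 2^(j-1) ≤ 2^(j-1) * M := Nat.le_mul_of_pos_right _ hMpos
      _ ≤ N := le_of_lt this
  have hd0 : (0:ℝ) ≤ d := le_trans (le_of_lt hc0) hd
  calc B N ≤ B (2^j * M) := Bmono _ _ (by omega)
    _ ≤ c^j * B M := hiter j
    _ ≤ (d:ℝ)^j * m :=
        mul_le_mul (pow_le_pow_left₀ (le_of_lt hc0) hd j) hm (Bnonneg _) (pow_nonneg hd0 j)
    _ ≤ 2^(2^(j-1)) := by exact_mod_cast keynat j hjge
    _ ≤ 2^N := pow_le_pow_right₀ one_le_two hlow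

private lemma telescope' (L : ℕ → ℝ) (hL : ∀ n, 1 ≤ L n) :
    ∀ N : ℕ, ∏ k ∈ Finset.range N, L k / L (k+1) = L 0 / L N := by
  have hLpos : ∀ k, (0:ℝ) < L k := fun k => lt_of_lt_of_le zero_lt_one (hL k)
  intro N
  induction N with
  | zero => simp [div_self (hLpos 0).ne']
  | succ n ih =>
    rw [Finset.prod_range_succ, ih]
    field_simp
    rw [div_eq_div_iff (mul_pos (hLpos n) (hLpos (n+1))).ne' (hLpos (n+1)).ne']
    ring

set_option maxHeartbeats 1000000 in
/-- Lemma 5 of the paper: under volume doubling and the universal bounds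
`1/L_n ≤ η_n(x) ≤ x^{-1/2}`, there are `c₀ > 0` and `x₀ ∈ (0,1)` such that for all
`x ∈ (0,x₀)` and `N ≥ 1` with `x F_N(x) > 1 ≥ x F_{N-1}(x)` one has
`|η_0'(x)| ≥ c₀ G_{N-1}(x)`, where `F_N(x) = Σ_{k=0}^N L_k η_{k+1}(x)` and
`G_N(x) = Σ_{k=0}^N (L_k η_{k+1}(x)² + η_{k+1}(x))`. -/
theorem stmt_10 (L : ℕ → ℝ) (hL : ∀ n : ℕ, 1 ≤ L n)
    (c : ℝ) (hc : 1 < c) (N₀ : ℕ)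
    (hdbl : ∀ N : ℕ, N₀ < N →
      (∑ n ∈ Finset.range (2*N+1), L n) ≤ c * ∑ n ∈ Finset.range (N+1), L n)
    (η η' : ℕ → ℝ → ℝ)
    (hderiv : ∀ (n : ℕ), ∀ x ∈ Set.Ioo (0:ℝ) 1, HasDerivAt (η n) (η' n x) x)
    (hmono : ∀ (n : ℕ), ∀ x ∈ Set.Ioo (0:ℝ) 1, η' n x ≤ 0)
    (hrec : ∀ (n : ℕ), ∀ x ∈ Set.Ioo (0:ℝ) 1,
      η n x = (η (n+1) x + 1 / L n) / (1 + x * L n * η (n+1) x))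
    (hbnd : ∀ (n : ℕ), ∀ x ∈ Set.Ioo (0:ℝ) 1,
      1 / L n ≤ η n x ∧ η n x ≤ x ^ (-(1:ℝ)/2)) :
    ∃ c₀ : ℝ, 0 < c₀ ∧ ∃ x₀ ∈ Set.Ioo (0:ℝ) 1, ∀ x : ℝ, 0 < x → x < x₀ →
      ∀ N : ℕ, 1 ≤ N →
        1 < x * ∑ k ∈ Finset.range (N+1), L k * η (k+1) x →
        x * ∑ k ∈ Finset.range N, L k * η (k+1) x ≤ 1 →
        c₀ * ∑ k ∈ Finset.range N, (L k * (η (k+1) x)^2 + η (k+1) x) ≤ |η' 0 x| := by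
  obtain ⟨N₁, hN₁1, hN₁⟩ := growth' L hL c hc N₀ hdbl
  have hN₁R : (0:ℝ) < N₁ := by exact_mod_cast hN₁1
  refine ⟨Real.exp (-6), Real.exp_pos _, min (1/2) (1/N₁),
    ⟨lt_min (by norm_num) (by positivity),
      lt_of_le_of_lt (min_le_left _ _) (by norm_num)⟩, ?_⟩
  intro x hx0 hxlt N hN1 _hFN hFN1
  have hLpos : ∀ k, (0:ℝ) < L k := fun k => lt_of_lt_of_le zero_lt_one (hL k)
  have hxhalf : x ≤ 1/2 := le_of_lt (lt_of_lt_of_le hxlt (min_le_left _ _))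
  have hx1 : x < 1 := by linarith
  have hxI : x ∈ Set.Ioo (0:ℝ) 1 := ⟨hx0, hx1⟩
  have hupos : ∀ k, 0 < η k x := fun k =>
    lt_of_lt_of_le (one_div_pos.mpr (hLpos k)) (hbnd k x hxI).1
  -- terms are nonnegative
  have hterm : ∀ k, (0:ℝ) ≤ L k * η (k+1) x :=
    fun k => mul_nonneg (hLpos k).le (hupos (k+1)).le
  -- Step 1 : x * N ≤ 2
  have hxN : x * N ≤ 2 := by
    rcases lt_or_ge N N₁ with h | h
    · have h1 : (N:ℝ) ≤ N₁ := by exact_mod_cast le_of_lt h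
      have h2 : x < 1/N₁ := lt_of_lt_of_le hxlt (min_le_right _ _)
      have h3 : x * N ≤ x * N₁ := by
        exact mul_le_mul_of_nonneg_left h1 hx0.le
      have h4 : x * N₁ ≤ (1/N₁) * N₁ := by nlinarith
      have h5 : (1/(N₁:ℝ)) * N₁ = 1 := by field_simp
      nlinarith
    · -- AM-GM route
      have hNne : (N:ℝ) ≠ 0 := by
        have : 0 < N := by omega
        exact_mod_cast Nat.pos_iff_ne_zero.mp this
      have hBN : (∑ n ∈ Finset.range (N+1), L n) ≤ 2^N := hN₁ N h
      have hLN : L N ≤ 2^N := by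
        refine le_trans ?_ hBN
        refine Finset.single_le_sum (f := L) (fun i _ => le_trans zero_le_one (hL i)) ?_
        simp
      have htel : ∏ k ∈ Finset.range N, L k / L (k+1) = L 0 / L N := telescope' L hL N
      have hw' : ∑ _k ∈ Finset.range N, ((N:ℝ)⁻¹) = 1 := by
        rw [Finset.sum_const, Finset.card_range, nsmul_eq_mul]
        field_simp
      have hamgm := Real.geom_mean_le_arith_mean_weighted (Finset.range N)
        (fun _ => (N:ℝ)⁻¹) (fun k => L k / L (k+1))
        (fun i _ => by positivity) hw'
        (fun i _ => div_nonneg (hLpos i).le (hLpos (i+1)).le)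
      rw [Real.finset_prod_rpow _ _ (fun i _ => div_nonneg (hLpos i).le (hLpos (i+1)).le) _,
        htel] at hamgm
      have hhalf : (1/2 : ℝ) ≤ (L 0 / L N) ^ ((N:ℝ)⁻¹) := by
        have hbase : ((2:ℝ)^N)⁻¹ ≤ L 0 / L N := by
          rw [le_div_iff₀ (hLpos N)]
          have : ((2:ℝ)^N)⁻¹ * L N ≤ ((2:ℝ)^N)⁻¹ * 2^N :=
            mul_le_mul_of_nonneg_left hLN (by positivity)
          rw [inv_mul_cancel₀ (by positivity)] at this
          linarith [hL 0]
        have h2 : (((2:ℝ)^N)⁻¹) ^ ((N:ℝ)⁻¹) ≤ (L 0 / L N) ^ ((N:ℝ)⁻¹) :=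
          Real.rpow_le_rpow (by positivity) hbase (by positivity)
        have h3 : (((2:ℝ)^N)⁻¹) ^ ((N:ℝ)⁻¹) = 1/2 := by
          rw [← Real.rpow_natCast 2 N, ← Real.rpow_neg (by norm_num),
            ← Real.rpow_mul (by norm_num)]
          rw [show -(N:ℝ) * (N:ℝ)⁻¹ = -1 by field_simp]
          rw [Real.rpow_neg_one]
          norm_num
        linarith
      have hsum2 : (N:ℝ)/2 ≤ ∑ k ∈ Finset.range N, L k / L (k+1) := by
        have h := le_trans hhalf hamgm
        rw [← Finset.mul_sum] at h
        have hNpos : (0:ℝ) < N := by positivity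
        have h2 := mul_le_mul_of_nonneg_left h (le_of_lt hNpos)
        rw [← mul_assoc, mul_inv_cancel₀ hNne, one_mul] at h2
        linarith
      have hFge : ∑ k ∈ Finset.range N, L k / L (k+1)
          ≤ ∑ k ∈ Finset.range N, L k * η (k+1) x := by
        refine Finset.sum_le_sum fun k _ => ?_
        calc L k / L (k+1) = L k * (1 / L (k+1)) := by ring
          _ ≤ L k * η (k+1) x :=
            mul_le_mul_of_nonneg_left (hbnd (k+1) x hxI).1 (hLpos k).le
      nlinarith [le_trans hsum2 hFge, hx0.le,
        mul_le_mul_of_nonneg_left (le_trans hsum2 hFge) hx0.le]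
  -- Step 2 : derivative recursion
  have dstep : ∀ n : ℕ,
      -η' n x = ((1-x) * (-η' (n+1) x) + (L n * (η (n+1) x)^2 + η (n+1) x))
        / (1 + x * L n * η (n+1) x)^2 := by
    intro n
    have hD : (0:ℝ) < 1 + x * L n * η (n+1) x := by
      have : 0 ≤ x * L n * η (n+1) x :=
        mul_nonneg (mul_nonneg hx0.le (hLpos n).le) (hupos (n+1)).le
      linarith
    have hu := hderiv (n+1) x hxI
    have h2 : HasDerivAt (fun y => 1 + y * L n * η (n+1) y)
        (L n * η (n+1) x + x * L n * η' (n+1) x) x := by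
      simpa using (((hasDerivAt_id x).mul_const (L n)).mul hu).const_add 1
    have h1 : HasDerivAt (fun y => η (n+1) y + 1 / L n) (η' (n+1) x) x := hu.add_const _
    have hq := h1.div h2 hD.ne'
    have heq : η n =ᶠ[nhds x]
        fun y => (η (n+1) y + 1 / L n) / (1 + y * L n * η (n+1) y) :=
      Filter.eventuallyEq_of_mem (isOpen_Ioo.mem_nhds hxI) (fun y hy => hrec n y hy)
    have huniq := (hderiv n x hxI).unique (hq.congr_of_eventuallyEq heq)
    rw [huniq]
    field_simp [(hLpos n).ne']
    ring
  -- notation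
  have hDpos : ∀ k : ℕ, (0:ℝ) < 1 + x * L k * η (k+1) x := by
    intro k
    have : 0 ≤ x * L k * η (k+1) x :=
      mul_nonneg (mul_nonneg hx0.le (hLpos k).le) (hupos (k+1)).le
    linarith
  have hPpos : ∀ k : ℕ, (0:ℝ) < ∏ i ∈ Finset.range k, (1 + x * L i * η (i+1) x) :=
    fun k => Finset.prod_pos fun i _ => hDpos i
  -- Step 3 : invariant
  have inv : ∀ k : ℕ, -η' 0 x
      = (1-x)^k / (∏ i ∈ Finset.range k, (1 + x * L i * η (i+1) x))^2 * (-η' k x)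
        + ∑ j ∈ Finset.range k,
            (1-x)^j / (∏ i ∈ Finset.range (j+1), (1 + x * L i * η (i+1) x))^2
              * (L j * (η (j+1) x)^2 + η (j+1) x) := by
    intro k
    induction k with
    | zero => simp
    | succ k ih =>
      rw [ih, Finset.sum_range_succ]
      have hkey : (1-x)^k / (∏ i ∈ Finset.range k, (1 + x * L i * η (i+1) x))^2 * (-η' k x)
          = (1-x)^(k+1) / (∏ i ∈ Finset.range (k+1), (1 + x * L i * η (i+1) x))^2
              * (-η' (k+1) x)
            + (1-x)^k / (∏ i ∈ Finset.range (k+1), (1 + x * L i * η (i+1) x))^2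
              * (L k * (η (k+1) x)^2 + η (k+1) x) := by
        rw [dstep k, Finset.prod_range_succ]
        field_simp
        ring
      rw [hkey]
      ring
  -- Step 4 : lower bound on weights
  have hkeyw : ∀ j ∈ Finset.range N, Real.exp (-6)
      ≤ (1-x)^j / (∏ i ∈ Finset.range (j+1), (1 + x * L i * η (i+1) x))^2 := by
    intro j hj
    have hjN : j < N := Finset.mem_range.mp hj
    -- product bound
    have hPle : (∏ i ∈ Finset.range (j+1), (1 + x * L i * η (i+1) x)) ≤ Real.exp 1 := by
      have h1 : (∏ i ∈ Finset.range (j+1), (1 + x * L i * η (i+1) x))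
          ≤ ∏ i ∈ Finset.range (j+1), Real.exp (x * L i * η (i+1) x) := by
        refine Finset.prod_le_prod (fun i _ => (hDpos i).le) (fun i _ => ?_)
        have := Real.add_one_le_exp (x * L i * η (i+1) x)
        linarith
      rw [← Real.exp_sum] at h1
      refine le_trans h1 (Real.exp_le_exp.mpr ?_)
      have h2 : ∑ i ∈ Finset.range (j+1), x * L i * η (i+1) x
          = x * ∑ i ∈ Finset.range (j+1), L i * η (i+1) x := by
        rw [Finset.mul_sum]; exact Finset.sum_congr rfl fun i _ => by ring
      rw [h2]
      have h3 : ∑ i ∈ Finset.range (j+1), L i * η (i+1) x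
          ≤ ∑ i ∈ Finset.range N, L i * η (i+1) x :=
        Finset.sum_le_sum_of_subset_of_nonneg
          (Finset.range_subset_range.2 (by omega)) (fun i _ _ => hterm i)
      calc x * ∑ i ∈ Finset.range (j+1), L i * η (i+1) x
          ≤ x * ∑ i ∈ Finset.range N, L i * η (i+1) x :=
            mul_le_mul_of_nonneg_left h3 hx0.le
        _ ≤ 1 := hFN1
    have hPsq : (∏ i ∈ Finset.range (j+1), (1 + x * L i * η (i+1) x))^2 ≤ Real.exp 2 := by
      have := pow_le_pow_left₀ (hPpos (j+1)).le hPle 2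
      refine le_trans this ?_
      rw [← Real.exp_nat_mul]
      norm_num
    -- power bound
    have hel : Real.exp (-(2*x)) ≤ 1 - x := by
      have h1 : (0:ℝ) < 1 + 2*x := by linarith
      have h2 : 1 + 2*x ≤ Real.exp (2*x) := by
        have := Real.add_one_le_exp (2*x); linarith
      have h3 : (Real.exp (2*x))⁻¹ ≤ (1 + 2*x)⁻¹ :=
        inv_anti₀ h1 h2
      have h4 : (1 + 2*x)⁻¹ ≤ 1 - x := by
        have h5 : 1 ≤ (1-x)*(1+2*x) := by nlinarith
        calc (1+2*x)⁻¹ ≤ ((1-x)*(1+2*x)) * (1+2*x)⁻¹ :=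
              le_mul_of_one_le_left (by positivity) h5
          _ = 1 - x := by field_simp
      rw [← Real.exp_neg] at h3
      calc Real.exp (-(2*x)) = Real.exp (-(2*x)) := rfl
        _ ≤ (1+2*x)⁻¹ := by rw [show -(2*x) = -(2*x) from rfl]; exact h3
        _ ≤ 1 - x := h4
    have hxp : Real.exp (-4) ≤ (1-x)^j := by
      have h1 : Real.exp (-4) ≤ Real.exp ((N:ℕ) * (-(2*x))) := by
        refine Real.exp_le_exp.mpr ?_
        have : (N:ℝ) * (2*x) ≤ 4 := by nlinarith [hxN]
        nlinarith
      have h2 : Real.exp ((N:ℕ) * (-(2*x))) = (Real.exp (-(2*x)))^N :=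
        Real.exp_nat_mul _ N
      have h3 : (Real.exp (-(2*x)))^N ≤ (1-x)^N :=
        pow_le_pow_left₀ (Real.exp_nonneg _) hel N
      have h4 : (1-x)^N ≤ (1-x)^j :=
        pow_le_pow_of_le_one (by linarith) (by linarith) (le_of_lt hjN)
      calc Real.exp (-4) ≤ Real.exp ((N:ℕ) * (-(2*x))) := h1
        _ = (Real.exp (-(2*x)))^N := h2
        _ ≤ (1-x)^N := h3
        _ ≤ (1-x)^j := h4
    have hdiv : Real.exp (-4) / Real.exp 2
        ≤ (1-x)^j / (∏ i ∈ Finset.range (j+1), (1 + x * L i * η (i+1) x))^2 :=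
      div_le_div₀ (pow_nonneg (by linarith) j) hxp (pow_pos (hPpos (j+1)) 2) hPsq
    calc Real.exp (-6) = Real.exp (-4) / Real.exp 2 := by
          rw [← Real.exp_sub]; norm_num
      _ ≤ _ := hdiv
  -- conclusion
  have habs : |η' 0 x| = -η' 0 x := abs_of_nonpos (hmono 0 x hxI)
  rw [habs, inv N]
  have hT : 0 ≤ (1-x)^N / (∏ i ∈ Finset.range N, (1 + x * L i * η (i+1) x))^2
      * (-η' N x) := by
    refine mul_nonneg (div_nonneg (pow_nonneg (by linarith) N) (by positivity)) ?_
    linarith [hmono N x hxI]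
  have hsum : Real.exp (-6) * ∑ k ∈ Finset.range N, (L k * (η (k+1) x)^2 + η (k+1) x)
      ≤ ∑ j ∈ Finset.range N,
          (1-x)^j / (∏ i ∈ Finset.range (j+1), (1 + x * L i * η (i+1) x))^2
            * (L j * (η (j+1) x)^2 + η (j+1) x) := by
    rw [Finset.mul_sum]
    refine Finset.sum_le_sum fun j hj => ?_
    refine mul_le_mul_of_nonneg_right (hkeyw j hj) ?_
    have := hupos (j+1)
    have := hLpos j
    nlinarith [sq_nonneg (η (j+1) x)]
  linarith
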